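/- Let N ∈ ℕ and q_N = ∑_{k=0}^{N−1} 4^k. Define φ_{N,j} as the triangular tent function supported on [j·2^{−2N}, (j+1)·2^{−2N}] with peak value 1 at the midpoint, and φ_N = ∑_{j=1}^{2^{2N}−1} φ_{N,j}. Then ∫_0^1 φ_N(x) |D_{q_N}(x)| dx ≥ c·N for some absolute constant c > 0. -/

import Mathlib

open MeasureTheory Filter Set ENNReal

noncomputable section

/-- The basic Rademacher-type function: 1 on [0,1/2), -1 on [1/2,1), 1-periodic. -/
def r0 (x : ℝ) : ℝ := if Int.fract x < 1/2 then 1 else -1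

/-- The Walsh functions: products of Rademacher functions according to binary digits. -/
def walsh (k : ℕ) (x : ℝ) : ℝ :=
  ∏ j ∈ Finset.range k, if k.testBit j then r0 (2 ^ j * x) else 1

/-- The Walsh–Dirichlet kernel `D_n`. -/
def walshDirichlet (n : ℕ) (x : ℝ) : ℝ :=
  ∑ k ∈ Finset.range n, walsh k x

/-- A finite ordered family of nonoverlapping subintervals of `[0,1)`. -/
structure IntervalPack (n : ℕ) where
  a : Fin n → ℝ
  b : Fin n → ℝ
  ha : ∀ i, 0 ≤ a i
  hab : ∀ i, a i < b i
  hb : ∀ i, b i ≤ 1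
  disj : ∀ i j, i ≠ j → Disjoint (Ioo (a i) (b i)) (Ioo (a j) (b j))

/-- A family of nonoverlapping intervals together with a point `y i` for each interval. -/
structure SharpPack (n : ℕ) extends IntervalPack n where
  y : Fin n → ℝ
  hy : ∀ i, y i ∈ Ico (0:ℝ) 1

/-- The `Λ^#`-variation sum of `f` over a pack, with weight sequence shifted by `m`
(weight `Λ (m+i)` for the `i`-th interval, `1`-based). -/
def sharpSum {n : ℕ} (Λ : ℕ → ℝ) (m : ℕ) (f : ℝ → ℝ → ℝ) (P : SharpPack n) : ℝ≥0∞ :=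
  ∑ i : Fin n, ENNReal.ofReal
    (|f (P.b i) (P.y i) - f (P.a i) (P.y i)| / Λ (m + i.1 + 1))

/-- `Λ_m^# V_1 (f)`. -/
def sharpV1 (Λ : ℕ → ℝ) (m : ℕ) (f : ℝ → ℝ → ℝ) : ℝ≥0∞ :=
  ⨆ (n : ℕ) (P : SharpPack n), sharpSum Λ m f P

/-- `Λ_m^# V_2 (f)`. -/
def sharpV2 (Λ : ℕ → ℝ) (m : ℕ) (f : ℝ → ℝ → ℝ) : ℝ≥0∞ :=
  sharpV1 Λ m (fun x y => f y x)

/-- `Λ_m^# V (f) = Λ_m^# V_1 (f) + Λ_m^# V_2 (f)`. -/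
def sharpV (Λ : ℕ → ℝ) (m : ℕ) (f : ℝ → ℝ → ℝ) : ℝ≥0∞ :=
  sharpV1 Λ m f + sharpV2 Λ m f

/-- `f ∈ Λ^# BV`: bounded `Λ^#`-variation. -/
def SharpBV (Λ : ℕ → ℝ) (f : ℝ → ℝ → ℝ) : Prop := sharpV Λ 0 f ≠ ⊤

/-- `f ∈ C Λ^# V`: continuity in `Λ^#`-variation, i.e. `Λ_m^# V (f) → 0`. -/
def CSharpV (Λ : ℕ → ℝ) (f : ℝ → ℝ → ℝ) : Prop :=
  Tendsto (fun m => sharpV Λ m f) atTop (nhds 0)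

/-- `v_1^#(n, f)`: supremum of sums of `n` increments over `n` nonoverlapping
intervals, with freely chosen points `y_i`. -/
def vSharp1 (f : ℝ → ℝ → ℝ) (n : ℕ) : ℝ≥0∞ :=
  ⨆ (P : SharpPack n), ∑ i : Fin n,
    ENNReal.ofReal |f (P.b i) (P.y i) - f (P.a i) (P.y i)|

def vSharp2 (f : ℝ → ℝ → ℝ) (n : ℕ) : ℝ≥0∞ := vSharp1 (fun x y => f y x) n

/-- `Λ V_1 (f)`: one fixed `y` for the whole family of intervals. -/
def lineV1 (Λ : ℕ → ℝ) (f : ℝ → ℝ → ℝ) : ℝ≥0∞ :=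
  ⨆ (n : ℕ) (y : Ico (0:ℝ) 1) (P : IntervalPack n),
    ∑ i : Fin n, ENNReal.ofReal (|f (P.b i) (y : ℝ) - f (P.a i) (y : ℝ)| / Λ (i.1 + 1))

def lineV2 (Λ : ℕ → ℝ) (f : ℝ → ℝ → ℝ) : ℝ≥0∞ := lineV1 Λ (fun x y => f y x)

/-- The mixed `(Λ¹,Λ²)`-variation `(Λ¹Λ²) V_{1,2}(f)`. -/
def mixedV (Λ₁ Λ₂ : ℕ → ℝ) (f : ℝ → ℝ → ℝ) : ℝ≥0∞ :=
  ⨆ (n : ℕ) (m : ℕ) (P : IntervalPack n) (Q : IntervalPack m),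
    ∑ i : Fin n, ∑ j : Fin m, ENNReal.ofReal
      (|f (P.a i) (Q.a j) - f (P.a i) (Q.b j) - f (P.b i) (Q.a j) + f (P.b i) (Q.b j)| /
        (Λ₁ (i.1 + 1) * Λ₂ (j.1 + 1)))

/-- Harmonic bounded variation `HBV` in the sense of Hardy–Krause/Waterman type. -/
def HBV (f : ℝ → ℝ → ℝ) : Prop :=
  lineV1 (fun n => (n : ℝ)) f + lineV2 (fun n => (n : ℝ)) f +
    mixedV (fun n => (n : ℝ)) (fun n => (n : ℝ)) f ≠ ⊤

/-- A finite family of nonoverlapping rectangles in `[0,1)²`. -/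
structure RectPack (n : ℕ) where
  a : Fin n → ℝ
  b : Fin n → ℝ
  c : Fin n → ℝ
  d : Fin n → ℝ
  ha : ∀ i, 0 ≤ a i
  hab : ∀ i, a i < b i
  hb : ∀ i, b i ≤ 1
  hc : ∀ i, 0 ≤ c i
  hcd : ∀ i, c i < d i
  hd : ∀ i, d i ≤ 1
  disj : ∀ i j, i ≠ j →
    Disjoint (Ioo (a i) (b i) ×ˢ Ioo (c i) (d i)) (Ioo (a j) (b j) ×ˢ Ioo (c j) (d j))

/-- The Dyachenko–Waterman rectangular variation `Λ* V (f)`. -/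
def rectV (Λ : ℕ → ℝ) (f : ℝ → ℝ → ℝ) : ℝ≥0∞ :=
  ⨆ (n : ℕ) (R : RectPack n), ∑ i : Fin n, ENNReal.ofReal
    (|f (R.a i) (R.c i) - f (R.a i) (R.d i) - f (R.b i) (R.c i) + f (R.b i) (R.d i)| /
      Λ (i.1 + 1))

/-- `q_N = 4^0 + 4^1 + ⋯ + 4^{N-1}`. -/
def qIdx (N : ℕ) : ℕ := ∑ k ∈ Finset.range N, 4 ^ k

/-- The tent function `φ_{N,j}` of height 1 on `[j 2^{-2N}, (j+1) 2^{-2N}]`. -/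
def tent (N j : ℕ) (x : ℝ) : ℝ :=
  max 0 (1 - |2 ^ (2 * N + 1) * x - (2 * j + 1)|)

/-- `φ_N = ∑_{j=1}^{2^{2N}-1} φ_{N,j}`. -/
def tentSum (N : ℕ) (x : ℝ) : ℝ :=
  ∑ j ∈ Finset.Icc 1 (2 ^ (2 * N) - 1), tent N j x

/-- `A_n^α = (α+1)(α+2)⋯(α+n)/n!`. -/
def Acoef (α : ℝ) (n : ℕ) : ℝ :=
  (∏ k ∈ Finset.range n, (α + k + 1)) / n.factorial

/-- The Cesàro `(C,α)` kernel for the Walsh system. -/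
def cesaroKernel (α : ℝ) (n : ℕ) (x : ℝ) : ℝ :=
  (Acoef α (n - 1))⁻¹ * ∑ k ∈ Finset.Icc 1 n, Acoef (α - 1) (n - k) * walshDirichlet k x

/-- The `(n,m)`-th Walsh–Fourier coefficient of `f`. -/
def fourierCoef (f : ℝ → ℝ → ℝ) (n m : ℕ) : ℝ :=
  ∫ x in (0:ℝ)..1, ∫ y in (0:ℝ)..1, f x y * walsh n x * walsh m y

/-- The rectangular partial sums of the double Walsh–Fourier series of `f`. -/
def partialSum (f : ℝ → ℝ → ℝ) (M N : ℕ) (x y : ℝ) : ℝ :=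
  ∑ m ∈ Finset.range M, ∑ n ∈ Finset.range N, fourierCoef f m n * walsh m x * walsh n y

/-- The Cesàro `(C;α,β)` means of the double Walsh–Fourier series of `f`. -/
def cesaroMean (α β : ℝ) (n m : ℕ) (f : ℝ → ℝ → ℝ) (x y : ℝ) : ℝ :=
  (Acoef α (n - 1) * Acoef β (m - 1))⁻¹ *
    ∑ i ∈ Finset.Icc 1 n, ∑ j ∈ Finset.Icc 1 m,
      Acoef (α - 1) (n - i) * Acoef (β - 1) (m - j) * partialSum f i j x y

/-- The sup norm of `f` over `[0,1]²` (in `ℝ≥0∞`). -/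
def supNorm (f : ℝ → ℝ → ℝ) : ℝ≥0∞ :=
  ⨆ (x : Icc (0:ℝ) 1) (y : Icc (0:ℝ) 1), ENNReal.ofReal |f x y|

/-- The norm `‖f‖_C + Λ^# V (f)` on `C ∩ Λ^# BV` (in `ℝ≥0∞`). -/
def bvNorm (Λ : ℕ → ℝ) (f : ℝ → ℝ → ℝ) : ℝ≥0∞ :=
  supNorm f + sharpV Λ 0 f

end

lemma r0_one {x : ℝ} (h0 : 0 ≤ x) (h : x < 1/2) : r0 x = 1 := by
  rw [r0, if_pos]
  rw [Int.fract_eq_self.mpr ⟨h0, by linarith⟩]; exact h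

lemma r0_negone {x : ℝ} (h0 : 1/2 ≤ x) (h : x < 1) : r0 x = -1 := by
  rw [r0, if_neg]
  rw [Int.fract_eq_self.mpr ⟨by linarith, h⟩]; linarith

lemma abs_r0 (x : ℝ) : |r0 x| = 1 := by
  rw [r0]; split <;> simp

lemma abs_walsh (k : ℕ) (x : ℝ) : |walsh k x| = 1 := by
  rw [walsh, Finset.abs_prod]
  apply Finset.prod_eq_one
  intro j _
  split <;> simp [abs_r0]

lemma walsh_eq_prod {k n : ℕ} (h : k < 2 ^ n) (x : ℝ) :
    walsh k x = ∏ j ∈ Finset.range n, if k.testBit j then r0 (2 ^ j * x) else 1 := by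
  rw [walsh]
  rcases le_total k n with hkn | hnk
  · exact Finset.prod_subset (Finset.range_subset_range.mpr hkn) (by
      intro j hj hj'
      simp only [Finset.mem_range] at hj hj'
      rw [Nat.testBit_lt_two_pow (lt_of_lt_of_le (Nat.lt_two_pow_self (n := k))
        (Nat.pow_le_pow_right (by norm_num) (by omega)))]
      simp)
  · symm
    exact Finset.prod_subset (Finset.range_subset_range.mpr hnk) (by
      intro j hj hj'
      simp only [Finset.mem_range] at hj hj'
      rw [Nat.testBit_lt_two_pow (lt_of_lt_of_le h
        (Nat.pow_le_pow_right (by norm_num) (by omega)))]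
      simp)

lemma testBit_aux0 (q r : ℕ) : (4 * q + r).testBit 0 = r.testBit 0 := by
  rw [Nat.testBit_zero, Nat.testBit_zero, decide_eq_decide]; omega

lemma testBit_aux1 (q r : ℕ) (hr : r < 4) : (4 * q + r).testBit 1 = r.testBit 1 := by
  rw [show (1:ℕ) = Nat.succ 0 from rfl, Nat.testBit_succ, Nat.testBit_succ,
    Nat.testBit_zero, Nat.testBit_zero, decide_eq_decide]
  omega

lemma testBit_aux2 (q r j : ℕ) (hr : r < 4) : (4 * q + r).testBit (j + 2) = q.testBit j := by
  rw [show j + 2 = Nat.succ (j+1) from rfl, Nat.testBit_succ,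
    show j + 1 = Nat.succ j from rfl, Nat.testBit_succ]
  have h : (4 * q + r) / 2 / 2 = q := by omega
  rw [h]

lemma walsh_four_mul_add (q r : ℕ) (hr : r < 4) (x : ℝ) :
    walsh (4 * q + r) x = walsh r x * walsh q (4 * x) := by
  obtain ⟨n, hn⟩ : ∃ n, q < 2 ^ n := ⟨q, Nat.lt_two_pow_self (n := q)⟩
  have h1 : 4 * q + r < 2 ^ (2 + n) := by
    rw [pow_add]; norm_num; omega
  rw [walsh_eq_prod h1, walsh_eq_prod (show r < 2 ^ 2 by omega), walsh_eq_prod hn,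
    Finset.prod_range_add]
  congr 1
  · apply Finset.prod_congr rfl
    intro j hj
    simp only [Finset.mem_range] at hj
    interval_cases j
    · rw [testBit_aux0]
    · rw [testBit_aux1 q r hr]
  · apply Finset.prod_congr rfl
    intro j _
    rw [show 2 + j = j + 2 by omega, testBit_aux2 q r j hr]
    by_cases h : q.testBit j
    · simp only [h, if_true]; congr 1; ring
    · simp [h]

lemma walsh_zero (x : ℝ) : walsh 0 x = 1 := by simp [walsh]

lemma walsh_one (x : ℝ) : walsh 1 x = r0 x := by
  rw [walsh_eq_prod (show 1 < 2^1 by norm_num), Finset.prod_range_succ, Finset.prod_range_zero]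
  norm_num [show Nat.testBit 1 0 = true from rfl]

lemma walsh_two (x : ℝ) : walsh 2 x = r0 (2 * x) := by
  rw [walsh_eq_prod (show 2 < 2^2 by norm_num), Finset.prod_range_succ, Finset.prod_range_succ,
    Finset.prod_range_zero]
  norm_num [show Nat.testBit 2 0 = false from rfl, show Nat.testBit 2 1 = true from rfl]

lemma walsh_three (x : ℝ) : walsh 3 x = r0 x * r0 (2 * x) := by
  rw [walsh_eq_prod (show 3 < 2^2 by norm_num), Finset.prod_range_succ, Finset.prod_range_succ,
    Finset.prod_range_zero]
  norm_num [show Nat.testBit 3 0 = true from rfl, show Nat.testBit 3 1 = true from rfl]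

lemma walsh_four_mul (q : ℕ) (x : ℝ) : walsh (4 * q) x = walsh q (4 * x) := by
  simpa [walsh_zero] using walsh_four_mul_add q 0 (by norm_num) x

lemma walshDirichlet_succ (n : ℕ) (y : ℝ) :
    walshDirichlet (n + 1) y = walshDirichlet n y + walsh n y := by
  rw [walshDirichlet, walshDirichlet, Finset.sum_range_succ]

lemma walshDirichlet_four (x : ℝ) :
    walshDirichlet 4 x = (1 + r0 x) * (1 + r0 (2 * x)) := by
  rw [show (4:ℕ) = 3+1 from rfl, walshDirichlet_succ, show (3:ℕ) = 2+1 from rfl,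
    walshDirichlet_succ, show (2:ℕ) = 1+1 from rfl, walshDirichlet_succ,
    show walshDirichlet 1 x = walshDirichlet (0+1) x from rfl, walshDirichlet_succ]
  rw [walshDirichlet, Finset.sum_range_zero, walsh_zero, walsh_one, walsh_two, walsh_three]
  ring

lemma walshDirichlet_four_mul (q : ℕ) (x : ℝ) :
    walshDirichlet (4 * q) x = walshDirichlet 4 x * walshDirichlet q (4 * x) := by
  induction q with
  | zero => simp [walshDirichlet]
  | succ q ih =>
    have e : 4 * (q + 1) = 4 * q + 1 + 1 + 1 + 1 := by ring
    rw [e, walshDirichlet_succ, walshDirichlet_succ, walshDirichlet_succ, walshDirichlet_succ,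
      ih, walshDirichlet_succ]
    have W4 : walshDirichlet 3 x + walsh 3 x = (1 + r0 x) * (1 + r0 (2 * x)) := by
      rw [← walshDirichlet_succ]; exact walshDirichlet_four x
    rw [show 4*q+1+1+1 = 4*q+3 by ring, show 4*q+1+1 = 4*q+2 by ring]
    rw [walsh_four_mul, walsh_four_mul_add q 1 (by norm_num) x,
      walsh_four_mul_add q 2 (by norm_num) x, walsh_four_mul_add q 3 (by norm_num) x,
      W4, walsh_one, walsh_two, walsh_three, walshDirichlet_succ]
    ring

lemma qIdx_succ (N : ℕ) : qIdx (N + 1) = 4 * qIdx N + 1 := by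
  rw [qIdx, qIdx, Finset.sum_range_succ', Finset.mul_sum]
  simp [pow_succ']

lemma dirichlet_rec (N : ℕ) (x : ℝ) :
    walshDirichlet (qIdx (N + 1)) x
      = (1 + r0 x) * (1 + r0 (2 * x)) * walshDirichlet (qIdx N) (4 * x)
        + walsh (qIdx N) (4 * x) := by
  rw [qIdx_succ, walshDirichlet_succ, walshDirichlet_four_mul, walshDirichlet_four,
    walsh_four_mul]

lemma key_bound : ∀ N m : ℕ, m < N → ∀ x : ℝ, ((1:ℝ)/4)^(m+1) ≤ x → x < ((1:ℝ)/4)^m →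
    (2 * 4^m + 1)/3 ≤ |walshDirichlet (qIdx N) x| := by
  intro N
  induction N with
  | zero => intro m hm; exact absurd hm (Nat.not_lt_zero m)
  | succ N ih =>
    intro m hm x h1 h2
    rw [dirichlet_rec]
    match m with
    | 0 =>
      have hx1 : (1:ℝ)/4 ≤ x := by norm_num at h1; linarith
      have hx2 : x < 1 := by norm_num at h2; linarith
      have hD4 : (1 + r0 x) * (1 + r0 (2*x)) = 0 := by
        rcases lt_or_ge x (1/2) with h | h
        · have : r0 (2*x) = -1 := r0_negone (by linarith) (by linarith)
          rw [this]; ring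
        · have : r0 x = -1 := r0_negone (by linarith) hx2
          rw [this]; ring
      rw [hD4, zero_mul, zero_add, abs_walsh]
      norm_num
    | m + 1 =>
      have hpow : (0:ℝ) < ((1:ℝ)/4)^(m+1+1) := by positivity
      have hx0 : 0 < x := lt_of_lt_of_le hpow h1
      have hple : ((1:ℝ)/4)^(m+1) ≤ 1/4 := by
        calc ((1:ℝ)/4)^(m+1) = ((1:ℝ)/4)^m * (1/4) := by rw [pow_succ]
        _ ≤ 1 * (1/4) := by
            have : ((1:ℝ)/4)^m ≤ 1 := pow_le_one₀ (by norm_num) (by norm_num)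
            linarith
        _ = 1/4 := by norm_num
      have hx2 : x < 1/4 := lt_of_lt_of_le h2 hple
      have e1 : r0 x = 1 := r0_one hx0.le (by linarith)
      have e2 : r0 (2*x) = 1 := r0_one (by linarith) (by linarith)
      rw [e1, e2]
      have ihh := ih m (by omega) (4*x)
        (by rw [pow_succ] at h1; nlinarith [h1])
        (by rw [pow_succ] at h2; nlinarith [h2])
      have habs := abs_walsh (qIdx N) (4*x)
      set D := walshDirichlet (qIdx N) (4*x) with hD
      set w := walsh (qIdx N) (4*x) with hw
      have hb : 4 * |D| - 1 ≤ |(1+1)*(1+1)*D + w| := by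
        have h3 : |(1+1)*(1+1)*D| ≤ |(1+1)*(1+1)*D + w| + |w| := by
          calc |(1+1)*(1+1)*D| = |((1+1)*(1+1)*D + w) + (-w)| := by ring_nf
          _ ≤ |(1+1)*(1+1)*D + w| + |-w| := abs_add_le _ _
          _ = |(1+1)*(1+1)*D + w| + |w| := by rw [abs_neg]
        have h4 : |(1+1)*(1+1)*D| = 4 * |D| := by
          rw [show ((1:ℝ)+1)*(1+1)*D = 4*D by ring, abs_mul]
          norm_num
        rw [h4, habs] at h3; linarith
      calc (2 * 4^(m+1) + 1)/3 = 4 * ((2 * (4:ℝ)^m + 1)/3) - 1 := by rw [pow_succ]; ring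
        _ ≤ 4 * |D| - 1 := by linarith
        _ ≤ _ := hb

lemma measurable_r0 : Measurable r0 := by
  unfold r0
  exact Measurable.ite (measurableSet_lt (measurable_id.fract) measurable_const)
    measurable_const measurable_const

lemma measurable_walsh (k : ℕ) : Measurable (walsh k) := by
  unfold walsh
  apply Finset.measurable_prod
  intro j _
  by_cases h : k.testBit j
  · simp only [h, if_true]
    exact measurable_r0.comp (measurable_const_mul _)
  · simp only [h, if_false]
    exact measurable_const

lemma measurable_walshDirichlet (n : ℕ) : Measurable (walshDirichlet n) := by
  unfold walshDirichlet
  exact Finset.measurable_sum _ (fun k _ => measurable_walsh k)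

lemma tent_nonneg (N j : ℕ) (x : ℝ) : 0 ≤ tent N j x := le_max_left _ _

lemma tent_le_one (N j : ℕ) (x : ℝ) : tent N j x ≤ 1 :=
  max_le (by norm_num) (by linarith [abs_nonneg (2 ^ (2 * N + 1) * x - (2 * (j:ℝ) + 1))])

lemma tentSum_nonneg (N : ℕ) (x : ℝ) : 0 ≤ tentSum N x :=
  Finset.sum_nonneg fun j _ => tent_nonneg N j x

lemma continuous_tentSum (N : ℕ) : Continuous (tentSum N) := by
  unfold tentSum
  refine continuous_finset_sum _ fun j _ => ?_
  unfold tent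
  exact continuous_const.max (by fun_prop)

lemma tentSum_le (N : ℕ) (x : ℝ) : tentSum N x ≤ (2^(2*N) : ℝ) := by
  unfold tentSum
  calc ∑ j ∈ Finset.Icc 1 (2^(2*N)-1), tent N j x
      ≤ ∑ _j ∈ Finset.Icc 1 (2^(2*N)-1), (1:ℝ) :=
        Finset.sum_le_sum fun j _ => tent_le_one N j x
  _ = ((Finset.Icc 1 (2^(2*N)-1)).card : ℝ) := by simp
  _ ≤ _ := by
      rw [Nat.card_Icc]
      have h1 : 1 ≤ 2^(2*N) := Nat.one_le_two_pow
      have : (2^(2*N) - 1 + 1 - 1 : ℕ) ≤ 2^(2*N) := by omega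
      calc ((2^(2*N) - 1 + 1 - 1 : ℕ) : ℝ) ≤ ((2^(2*N) : ℕ) : ℝ) := by exact_mod_cast this
      _ = (2^(2*N) : ℝ) := by push_cast; ring

lemma abs_walshDirichlet_le (n : ℕ) (x : ℝ) : |walshDirichlet n x| ≤ n := by
  rw [walshDirichlet]
  calc |∑ k ∈ Finset.range n, walsh k x| ≤ ∑ k ∈ Finset.range n, |walsh k x| :=
        Finset.abs_sum_le_sum_abs _ _
  _ = n := by simp [abs_walsh]

lemma four_pow (b : ℕ) : ((4:ℝ))^b = 2^(2*b) := by
  rw [show (4:ℝ) = 2^2 by norm_num, ← pow_mul]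

lemma quarter_pow (a : ℕ) : ((1:ℝ)/4)^a = ((2:ℝ)^(2*a))⁻¹ := by
  rw [one_div, inv_pow, show (4:ℝ) = 2^2 by norm_num, ← pow_mul]

lemma pow_helper (a b : ℕ) : (2:ℝ)^(2*(a+b)+1) * ((1:ℝ)/4)^a = 2 * 4^b := by
  rw [quarter_pow, four_pow, show 2*(a+b)+1 = 2*a + (2*b+1) by ring, pow_add]
  rw [mul_comm ((2:ℝ)^(2*a)) _, mul_assoc, mul_inv_cancel₀ (by positivity), mul_one, pow_succ]
  ring

lemma step2 (N m k : ℕ) (hN : N = m + k + 1)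
    (hFint : MeasureTheory.IntegrableOn (fun x => tentSum N x * |walshDirichlet (qIdx N) x|)
      (Set.Ioc (((1:ℝ)/4)^(m+1)) (((1:ℝ)/4)^m))) :
    (1/8 : ℝ) ≤ ∫ x in Set.Ioc (((1:ℝ)/4)^(m+1)) (((1:ℝ)/4)^m),
      tentSum N x * |walshDirichlet (qIdx N) x| := by
  have hpow2 : (0:ℝ) < 2^(2*N+1) := by positivity
  set F : ℝ → ℝ := fun x => tentSum N x * |walshDirichlet (qIdx N) x| with hF
  set Mset : ℕ → Set ℝ :=
    fun j => Set.Icc ((2*(j:ℝ)+1/2)/2^(2*N+1)) ((2*(j:ℝ)+3/2)/2^(2*N+1)) with hM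
  set J : Finset ℕ := Finset.Icc (4^k) (4^(k+1) - 1) with hJ
  have hone_le : (1:ℕ) ≤ 4^k := Nat.one_le_pow _ _ (by norm_num)
  have hjbounds : ∀ j ∈ J, 4^k ≤ j ∧ j ≤ 4^(k+1) - 1 := fun j hj => Finset.mem_Icc.mp hj
  -- lower endpoint identity
  have hlo_eq : ((1:ℝ)/4)^(m+1) = (2*4^k) / 2^(2*N+1) := by
    rw [eq_div_iff (ne_of_gt hpow2), mul_comm, ← pow_helper (m+1) k]
    congr 2
    omega
  have hhi_eq : ((1:ℝ)/4)^m = (2*4^(k+1)) / 2^(2*N+1) := by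
    rw [eq_div_iff (ne_of_gt hpow2), mul_comm, ← pow_helper m (k+1)]
    congr 2
    omega
  have hMsub : ∀ j ∈ J, Mset j ⊆ Set.Ioc (((1:ℝ)/4)^(m+1)) (((1:ℝ)/4)^m) := by
    intro j hj x hx
    obtain ⟨hj1, hj2⟩ := hjbounds j hj
    have hj1' : ((4:ℝ)^k) ≤ (j:ℝ) := by exact_mod_cast hj1
    have hj2' : (j:ℝ) ≤ (4:ℝ)^(k+1) - 1 := by
      have : (j:ℝ) ≤ ((4^(k+1) - 1 : ℕ) : ℝ) := by exact_mod_cast hj2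
      rwa [Nat.cast_sub (Nat.one_le_pow _ _ (by norm_num)), Nat.cast_pow, Nat.cast_ofNat,
        Nat.cast_one] at this
    obtain ⟨hx1, hx2⟩ := hx
    constructor
    · rw [hlo_eq]
      calc (2*(4:ℝ)^k) / 2^(2*N+1) < (2*(j:ℝ)+1/2)/2^(2*N+1) := by gcongr ?_ / _; linarith
      _ ≤ x := hx1
    · rw [hhi_eq]
      calc x ≤ (2*(j:ℝ)+3/2)/2^(2*N+1) := hx2
      _ ≤ (2*(4:ℝ)^(k+1)) / 2^(2*N+1) := by gcongr ?_ / _; linarith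
  have hdisj : (↑J : Set ℕ).Pairwise (Function.onFun Disjoint Mset) := by
    intro j hj j' hj' hne
    rw [Function.onFun, Set.disjoint_left]
    intro x hx hx'
    obtain ⟨ha1, ha2⟩ := hx
    obtain ⟨hb1, hb2⟩ := hx'
    rcases hne.lt_or_gt with hlt | hlt
    · have hc : (j:ℝ) + 1 ≤ (j':ℝ) := by exact_mod_cast hlt
      have : (2*(j:ℝ)+3/2)/2^(2*N+1) < (2*(j':ℝ)+1/2)/2^(2*N+1) := by
        gcongr ?_ / _; linarith
      linarith
    · have hc : (j':ℝ) + 1 ≤ (j:ℝ) := by exact_mod_cast hlt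
      have : (2*(j':ℝ)+3/2)/2^(2*N+1) < (2*(j:ℝ)+1/2)/2^(2*N+1) := by
        gcongr ?_ / _; linarith
      linarith
  have hint : ∀ j ∈ J, MeasureTheory.IntegrableOn F (Mset j) :=
    fun j hj => hFint.mono_set (hMsub j hj)
  have hlow : ∀ j ∈ J, ((4:ℝ)^m / 3) * (1/2^(2*N+1)) ≤ ∫ x in Mset j, F x := by
    intro j hj
    have hpts : ∀ x ∈ Mset j, (4:ℝ)^m / 3 ≤ F x := by
      intro x hx
      obtain ⟨hx1, hx2⟩ := hx
      have hxIoc := hMsub j hj ⟨hx1, hx2⟩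
      -- tent bound
      have hxc1 : 2*(j:ℝ)+1/2 ≤ 2^(2*N+1) * x := by
        rw [mul_comm ((2:ℝ)^(2*N+1)) x]; exact (div_le_iff₀ hpow2).mp hx1
      have hxc2 : 2^(2*N+1) * x ≤ 2*(j:ℝ)+3/2 := by
        rw [mul_comm ((2:ℝ)^(2*N+1)) x]; exact (le_div_iff₀ hpow2).mp hx2
      have habs : |2^(2*N+1) * x - (2*(j:ℝ)+1)| ≤ 1/2 :=
        abs_le.mpr ⟨by linarith, by linarith⟩
      have htent : (1:ℝ)/2 ≤ tent N j x := by
        rw [tent]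
        exact le_trans (by linarith) (le_max_right _ _)
      have hmem : j ∈ Finset.Icc 1 (2^(2*N) - 1) := by
        obtain ⟨hj1, hj2⟩ := hjbounds j hj
        refine Finset.mem_Icc.mpr ⟨by omega, ?_⟩
        have h2 : (2:ℕ)^(2*N) = 4^N := by rw [pow_mul]; norm_num
        have h3 : (4:ℕ)^(k+1) ≤ 4^N := Nat.pow_le_pow_right (by norm_num) (by omega)
        omega
      have htsum : (1:ℝ)/2 ≤ tentSum N x := by
        refine le_trans htent ?_
        exact Finset.single_le_sum (f := fun i => tent N i x)
          (fun i _ => tent_nonneg N i x) hmem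
      have hj2' : (j:ℝ) ≤ (4:ℝ)^(k+1) - 1 := by
        have h := (hjbounds j hj).2
        have : (j:ℝ) ≤ ((4^(k+1) - 1 : ℕ) : ℝ) := by exact_mod_cast h
        rwa [Nat.cast_sub (Nat.one_le_pow _ _ (by norm_num)), Nat.cast_pow, Nat.cast_ofNat,
          Nat.cast_one] at this
      have hxlt : x < ((1:ℝ)/4)^m := by
        rw [hhi_eq]
        calc x ≤ (2*(j:ℝ)+3/2)/2^(2*N+1) := hx2
        _ < (2*(4:ℝ)^(k+1)) / 2^(2*N+1) := by gcongr ?_ / _; linarith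
      have hkey : (2 * (4:ℝ)^m + 1)/3 ≤ |walshDirichlet (qIdx N) x| :=
        key_bound N m (by omega) x (le_of_lt hxIoc.1) hxlt
      calc (4:ℝ)^m / 3 ≤ (1/2) * ((2 * (4:ℝ)^m + 1)/3) := by linarith
      _ ≤ tentSum N x * |walshDirichlet (qIdx N) x| :=
          mul_le_mul htsum hkey (by positivity) (le_trans (by norm_num) htsum)
      _ = F x := rfl
    have := MeasureTheory.setIntegral_ge_of_const_le (μ := MeasureTheory.volume)
      (measurableSet_Icc) (measure_Icc_lt_top).ne hpts (hint j hj)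
    have hvol : ((MeasureTheory.volume (Mset j)).toReal) = 1/2^(2*N+1) := by
      have hd : (2*(j:ℝ)+3/2)/2^(2*N+1) - (2*(j:ℝ)+1/2)/2^(2*N+1) = 1/2^(2*N+1) := by
        rw [div_sub_div_same]; norm_num
      rw [hM]
      rw [Real.volume_Icc, hd, ENNReal.toReal_ofReal (by positivity)]
    unfold MeasureTheory.Measure.real at this
    rw [hvol, smul_eq_mul, mul_comm] at this
    exact this
  have hcard : (J.card : ℝ) = 3 * 4^k := by
    rw [hJ, Nat.card_Icc]
    have h4 : (4:ℕ)^(k+1) = 4 * 4^k := by rw [pow_succ]; ring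
    have : (4:ℕ)^(k+1) - 1 + 1 - 4^k = 3 * 4^k := by omega
    rw [this]
    push_cast; ring
  calc (1/8 : ℝ) = (J.card : ℝ) * ((4:ℝ)^m/3 * (1/2^(2*N+1))) := by
        rw [hcard, four_pow k, four_pow m, hN,
          show 2*(m+k+1)+1 = 2*m + (2*k+3) by ring, pow_add 2 (2*m) (2*k+3),
          pow_add 2 (2*k) 3]
        field_simp
        ring
  _ = ∑ _j ∈ J, ((4:ℝ)^m/3 * (1/2^(2*N+1))) := by rw [Finset.sum_const, nsmul_eq_mul]
  _ ≤ ∑ j ∈ J, ∫ x in Mset j, F x := Finset.sum_le_sum hlow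
  _ = ∫ x in ⋃ j ∈ J, Mset j, F x :=
      (MeasureTheory.integral_biUnion_finset J (fun j _ => measurableSet_Icc) hdisj hint).symm
  _ ≤ ∫ x in Set.Ioc (((1:ℝ)/4)^(m+1)) (((1:ℝ)/4)^m), F x := by
      apply MeasureTheory.setIntegral_mono_set hFint
      · exact Filter.Eventually.of_forall fun x =>
          mul_nonneg (tentSum_nonneg N x) (abs_nonneg _)
      · exact (Set.iUnion₂_subset hMsub).eventuallyLE


/-- `∫_0^1 φ_N |D_{q_N}| ≥ c N` for an absolute constant `c > 0`. -/
theorem stmt13 :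
    ∃ c : ℝ, 0 < c ∧ ∀ N : ℕ,
      c * (N : ℝ) ≤ ∫ x in (0 : ℝ)..1, tentSum N x * |walshDirichlet (qIdx N) x| := by
  refine ⟨1/8, by norm_num, fun N => ?_⟩
  set F : ℝ → ℝ := fun x => tentSum N x * |walshDirichlet (qIdx N) x| with hF
  have hFnn : ∀ x, 0 ≤ F x := fun x => mul_nonneg (tentSum_nonneg N x) (abs_nonneg _)
  have hFmeas : Measurable F :=
    (continuous_tentSum N).measurable.mul (measurable_walshDirichlet _).abs
  have hFint : MeasureTheory.IntegrableOn F (Set.Ioc 0 1) := by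
    apply MeasureTheory.Measure.integrableOn_of_bounded
      (M := (2^(2*N) : ℝ) * (qIdx N : ℝ))
    · rw [Real.volume_Ioc]; exact ENNReal.ofReal_ne_top
    · exact hFmeas.aestronglyMeasurable
    · refine MeasureTheory.ae_of_all _ fun a => ?_
      rw [Real.norm_eq_abs, hF, abs_mul, abs_abs, abs_of_nonneg (tentSum_nonneg N a)]
      exact mul_le_mul (tentSum_le N a) (abs_walshDirichlet_le _ a) (abs_nonneg _)
        (by positivity)
  rw [intervalIntegral.integral_of_le (by norm_num)]
  set I : ℕ → Set ℝ := fun m => Set.Ioc (((1:ℝ)/4)^(m+1)) (((1:ℝ)/4)^m) with hI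
  have hIsub : ∀ m, I m ⊆ Set.Ioc 0 1 := fun m =>
    Set.Ioc_subset_Ioc (by positivity) (pow_le_one₀ (by norm_num) (by norm_num))
  have hIdisj : (↑(Finset.range N) : Set ℕ).Pairwise (Function.onFun Disjoint I) := by
    intro a _ b _ hab
    rw [Function.onFun]
    have key : ∀ a b : ℕ, a < b → Disjoint (I a) (I b) := by
      intro a b h
      apply Set.Ioc_disjoint_Ioc.mpr
      calc min (((1:ℝ)/4)^a) (((1:ℝ)/4)^b) ≤ ((1:ℝ)/4)^b := min_le_right _ _
      _ ≤ ((1:ℝ)/4)^(a+1) :=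
          pow_le_pow_of_le_one (by norm_num) (by norm_num) (by omega)
      _ ≤ max (((1:ℝ)/4)^(a+1)) (((1:ℝ)/4)^(b+1)) := le_max_left _ _
    rcases hab.lt_or_gt with h | h
    · exact key a b h
    · exact (key b a h).symm
  calc (1/8 : ℝ) * N = ∑ _m ∈ Finset.range N, (1/8 : ℝ) := by
        rw [Finset.sum_const, Finset.card_range, nsmul_eq_mul]; ring
  _ ≤ ∑ m ∈ Finset.range N, ∫ x in I m, F x := by
      refine Finset.sum_le_sum fun m hm => ?_
      have hmN : m < N := Finset.mem_range.mp hm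
      obtain ⟨k, hk⟩ : ∃ k, N = m + k + 1 := ⟨N - m - 1, by omega⟩
      exact step2 N m k hk (hFint.mono_set (hIsub m))
  _ = ∫ x in ⋃ m ∈ Finset.range N, I m, F x :=
      (MeasureTheory.integral_biUnion_finset _ (fun m _ => measurableSet_Ioc) hIdisj
        (fun m _ => hFint.mono_set (hIsub m))).symm
  _ ≤ ∫ x in Set.Ioc (0:ℝ) 1, F x := by
      apply MeasureTheory.setIntegral_mono_set hFint
      · exact Filter.Eventually.of_forall hFnn
      · exact (Set.iUnion₂_subset fun m _ => hIsub m).eventuallyLE
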